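/- Let W(y) = Dy² - aTy + a², and let P be twice differentiable on an open interval with P(y₀) < 0 < y₀, W(y₀) > 0, W(P(y₀)) > 0, satisfying P'(y₀) = y₀W(P(y₀))/(P(y₀)W(y₀)). Then P''(y₀) = -a²(y₀² - P(y₀)²)·W(P(y₀)) / (P(y₀)³·W(y₀)²). -/

import Mathlib

open Real Set

theorem second_derivative_formula (a T D : ℝ)
    (W : ℝ → ℝ) (hW : ∀ y, W y = D * y ^ 2 - a * T * y + a ^ 2)
    (l r : ℝ) (P : ℝ → ℝ)
    (hdiff : ∀ y₀ ∈ Set.Ioo l r, DifferentiableAt ℝ P y₀)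
    (hdiff' : ∀ y₀ ∈ Set.Ioo l r, DifferentiableAt ℝ (deriv P) y₀)
    (hcond : ∀ y₀ ∈ Set.Ioo l r,
      P y₀ < 0 ∧ 0 < y₀ ∧ 0 < W y₀ ∧ 0 < W (P y₀) ∧
      deriv P y₀ = y₀ * W (P y₀) / (P y₀ * W y₀)) :
    ∀ y₀ ∈ Set.Ioo l r,
      deriv (deriv P) y₀ =
        -(a ^ 2 * (y₀ ^ 2 - (P y₀) ^ 2) * W (P y₀)) / ((P y₀) ^ 3 * (W y₀) ^ 2) := by
  intro y₀ hy
  obtain ⟨hP0, hy0, hW0, hWP0, hd⟩ := hcond y₀ hy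
  have hmem : Set.Ioo l r ∈ nhds y₀ := isOpen_Ioo.mem_nhds hy
  have heq : deriv P =ᶠ[nhds y₀] fun y => y * W (P y) / (P y * W y) :=
    Filter.eventually_of_mem hmem (fun y hy => (hcond y hy).2.2.2.2)
  rw [heq.deriv_eq]
  have hPdiff := hdiff y₀ hy
  have hP : HasDerivAt P (deriv P y₀) y₀ := hPdiff.hasDerivAt
  set p := P y₀ with hp
  set p' := deriv P y₀ with hp'
  have hpne : p ≠ 0 := ne_of_lt hP0
  have hWne : W y₀ ≠ 0 := ne_of_gt hW0
  have hDen : p * W y₀ ≠ 0 := mul_ne_zero hpne hWne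
  simp only [hW] at *
  -- numerator: y * (D * (P y)^2 - a*T*(P y) + a^2)
  have hNum : HasDerivAt (fun y => y * (D * (P y) ^ 2 - a * T * P y + a ^ 2))
      (1 * (D * p ^ 2 - a * T * p + a ^ 2) + y₀ * (D * (2 * p * p') - a * T * p')) y₀ := by
    have h1 : HasDerivAt (fun y => D * (P y) ^ 2 - a * T * P y + a ^ 2)
        (D * (2 * p * p') - a * T * p') y₀ := by
      have := (((hP.fun_pow 2).const_mul D).fun_sub (hP.const_mul (a * T))).add_const (a ^ 2)
      refine this.congr_deriv ?_
      rw [← hp]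
      norm_num
    exact (hasDerivAt_id y₀).mul h1
  -- denominator: P y * (D*y^2 - a*T*y + a^2)
  have hDenD : HasDerivAt (fun y => P y * (D * y ^ 2 - a * T * y + a ^ 2))
      (p' * (D * y₀ ^ 2 - a * T * y₀ + a ^ 2) + p * (D * (2 * y₀) - a * T)) y₀ := by
    have h2 : HasDerivAt (fun y : ℝ => D * y ^ 2 - a * T * y + a ^ 2)
        (D * (2 * y₀) - a * T) y₀ := by
      have := ((((hasDerivAt_id y₀).fun_pow 2).const_mul D).fun_sub
        ((hasDerivAt_id y₀).const_mul (a * T))).add_const (a ^ 2)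
      refine this.congr_deriv ?_
      norm_num
    exact hP.mul h2
  have hdiv := hNum.div hDenD hDen
  rw [show (fun y => y * (D * P y ^ 2 - a * T * P y + a ^ 2) / (P y * (D * y ^ 2 - a * T * y + a ^ 2))) = ((fun y => y * (D * P y ^ 2 - a * T * P y + a ^ 2)) / fun y => P y * (D * y ^ 2 - a * T * y + a ^ 2)) from rfl, hdiv.deriv]
  rw [hd, ← hp]
  have hWne' : y₀ * (D * y₀ - a * T) + a ^ 2 ≠ 0 := fun h => hWne (by linear_combination h)
  field_simp
  ring
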